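/- Let R := o_L/π_L^n o_L and let (M, φ_M) be an etale φ-module over R((Z)). Then the map φ_M − 1 : M → M is an open map for the weak topology; in particular it is topologically strict (the quotient topology of M/ker(φ_M − 1) agrees with the subspace topology of the image). -/

import Mathlib

set_option synthInstance.maxHeartbeats 1000000
set_option maxHeartbeats 1000000

/-- `M` with the `A`-action twisted through the ring endomorphism `φ`. -/
def TwMod {A : Type*} [CommRing A] (φ : A →+* A) (M : Type*) := M

instance {A : Type*} [CommRing A] (φ : A →+* A) (M : Type*) [AddCommGroup M] :
    AddCommGroup (TwMod φ M) := inferInstanceAs (AddCommGroup M)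

instance {A : Type*} [CommRing A] (φ : A →+* A) (M : Type*) [AddCommGroup M]
    [Module A M] : Module A (TwMod φ M) := Module.compHom M φ

/-- The linearization `A ⊗_{A,φ} M → M`, `f ⊗ m ↦ f·φM(m)`, of a `φ`-semilinear map `φM`
(the first tensor factor carries the `A`-action twisted by `φ`, so the relation
`φ(a)·f ⊗ m = f ⊗ a·m` holds; the target carries the twisted action, making the map
`A`-linear).  An étale `φ`-module is one for which this map is bijective. -/
noncomputable def frobLinearization {A : Type*} [CommRing A] (φ : A →+* A)
    {M : Type*} [AddCommGroup M] [Module A M]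
    (φM : M →+ M) (hφM : ∀ (a : A) (m : M), φM (a • m) = φ a • φM m) :
    TensorProduct A (TwMod φ A) M →ₗ[A] TwMod φ M :=
  TensorProduct.lift
    { toFun := fun f =>
        { toFun := fun m => (show M from (show A from f) • φM m)
          map_add' := fun x y => by
            show (show A from f) • φM (x + y) = (show A from f) • φM x + (show A from f) • φM y
            rw [map_add, smul_add]
          map_smul' := fun a m => by
            show (show A from f) • φM (a • m) = φ a • ((show A from f) • φM m)
            rw [hφM a m, smul_comm] }
      map_add' := fun f g => LinearMap.ext fun m => by
        show ((show A from f) + (show A from g)) • φM m =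
          (show A from f) • φM m + (show A from g) • φM m
        rw [add_smul]
      map_smul' := fun a f => LinearMap.ext fun m => by
        show (φ a * (show A from f)) • φM m = φ a • ((show A from f) • φM m)
        rw [mul_smul] }


namespace Statement11Aux
open HahnSeries

variable {R : Type*} [CommRing R]

/-- The subgroup of Laurent series with coefficients vanishing below `k`. -/
def VS (R : Type*) [CommRing R] (k : ℤ) : AddSubgroup (LaurentSeries R) where
  carrier := {x | ∀ i < k, x.coeff i = 0}
  zero_mem' := fun i _ => rfl
  add_mem' := fun {a b} ha hb i hi => by
    rw [HahnSeries.coeff_add, ha i hi, hb i hi, add_zero]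
  neg_mem' := fun {a} ha i hi => by rw [HahnSeries.coeff_neg, ha i hi, neg_zero]

lemma mem_VS {k : ℤ} {x : LaurentSeries R} : x ∈ VS R k ↔ ∀ i < k, x.coeff i = 0 := Iff.rfl

lemma VS_mono {a b : ℤ} (h : a ≤ b) : VS R b ≤ VS R a :=
  fun _ hx i hi => hx i (lt_of_lt_of_le hi h)

lemma mul_mem_VS {a b : ℤ} {x y : LaurentSeries R} (hx : x ∈ VS R a) (hy : y ∈ VS R b) :
    x * y ∈ VS R (a + b) := by
  intro i hi
  rw [HahnSeries.coeff_mul]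
  refine Finset.sum_eq_zero fun ij hij => ?_
  rw [Finset.mem_addAntidiagonal] at hij
  by_cases h1 : ij.1 < a
  · rw [hx ij.1 h1, zero_mul]
  · rw [hy ij.2 (by push_neg at h1; omega), mul_zero]

lemma coeff_ofPowerSeries_neg {i : ℤ} (hi : i < 0) (f : PowerSeries R) :
    ((ofPowerSeries ℤ R) f).coeff i = 0 := by
  rw [ofPowerSeries_apply, embDomain_notin_range]
  rintro ⟨m, hm⟩
  have hm' : ((m : ℕ) : ℤ) = i := hm
  omega

lemma eq_ofPowerSeries {x : LaurentSeries R} (hx : x ∈ VS R 0) :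
    x = ofPowerSeries ℤ R (PowerSeries.mk fun m => x.coeff m) := by
  ext i
  rcases lt_or_ge i 0 with h | h
  · rw [hx i h, coeff_ofPowerSeries_neg h]
  · obtain ⟨m, rfl⟩ := Int.eq_ofNat_of_zero_le h
    rw [ofPowerSeries_apply_coeff, PowerSeries.coeff_mk]

lemma coeff_pow_eq_zero {q n : ℕ} {π : R} (hπn : π ^ n = 0)
    {g F : PowerSeries R} (hg : PowerSeries.constantCoeff g = 0)
    (hF : F = PowerSeries.X ^ q + PowerSeries.C π * g) :
    ∀ m j : ℕ, j + (q - 1) * (n - 1) < q * m → PowerSeries.coeff j (F ^ m) = 0 := by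
  intro m j hj
  have hgx : PowerSeries.X ∣ g := PowerSeries.X_dvd_iff.2 hg
  rw [hF, add_pow, map_sum]
  refine Finset.sum_eq_zero fun l hl => ?_
  rw [Finset.mem_range, Nat.lt_succ_iff] at hl
  rcases le_or_gt n (m - l) with hn | hn
  · have : (PowerSeries.C π * g) ^ (m - l) = 0 := by
      rw [mul_pow, ← map_pow, show π ^ (m - l) = 0 from ?_, map_zero, zero_mul]
      calc π ^ (m - l) = π ^ n * π ^ (m - l - n) := by rw [← _root_.pow_add]; congr 1; omega
        _ = 0 := by rw [hπn, zero_mul]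
    rw [this]; simp
  · -- m - l < n
    have hdvd : PowerSeries.X ^ (q * l + (m - l)) ∣
        (PowerSeries.X ^ q) ^ l * (PowerSeries.C π * g) ^ (m - l)
          * (m.choose l : PowerSeries R) := by
      refine Dvd.dvd.mul_right ?_ _
      rw [_root_.pow_add, ← pow_mul]
      exact mul_dvd_mul dvd_rfl
        (by rw [mul_pow]; exact Dvd.dvd.mul_left (pow_dvd_pow_of_dvd hgx _) _)
    refine PowerSeries.X_pow_dvd_iff.1 hdvd j ?_
    rcases Nat.eq_zero_or_pos q with hq0 | hq0
    · subst hq0; simp at hj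
    · have h3 : q * m = q * l + q * (m - l) := by
        rw [← Nat.mul_add]; congr 1; omega
      have h5 : (1 + (q - 1)) * (m - l) = (m - l) + (q - 1) * (m - l) := by
        rw [add_mul, one_mul]
      have h6 : (q - 1) * (m - l) ≤ (q - 1) * (n - 1) := Nat.mul_le_mul_left _ (by omega)
      have h7 : 1 + (q - 1) = q := by omega
      rw [h7] at h5
      omega

end Statement11Aux

/-- Context as in Statement 10: `O = o_L` is the ring of integers of a finite extension of `ℚ_p`
with prime `π` and residue cardinality `q`, `Xπ = [π_L](Z)` a Lubin-Tate series,
`R := o_L/π^n o_L` the discrete quotient ring, `R((Z))` with its weak topology, `φA` the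
substitution `f(Z) ↦ f([π_L](Z))` on `R((Z))`, and `(M, φM)` an étale `φ`-module over
`R((Z))`: a finitely generated `R((Z))`-module with its weak topology together with a
`φA`-semilinear map whose linearization is bijective.

Conclusion: the map `φM − 1 : M → M` is an open map for the weak topology; in particular it
is topologically strict: the image of any open set is open in the subspace topology of the
range (equivalently, the induced map from `M/ker(φM − 1)` with the quotient topology onto the
image with the subspace topology is a homeomorphism). -/
theorem statement11_phi_minus_one_open
    (O : Type*) [CommRing O] [IsDomain O] [IsDiscreteValuationRing O]
    (π : O) (hπ : Irreducible π) [IsAdicComplete (Ideal.span {π}) O]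
    (q : ℕ) (hq1 : 1 < q) (hq : Nat.card (O ⧸ Ideal.span {π}) = q)
    (Xπ : PowerSeries O)
    (hXπ0 : PowerSeries.constantCoeff Xπ = 0)
    (hXπ1 : PowerSeries.coeff 1 Xπ = π)
    (hXπq : ∃ gq : PowerSeries O, Xπ = PowerSeries.X ^ q + PowerSeries.C π * gq)
    (n : ℕ) (hn : 1 ≤ n)
    (R : Type*) [CommRing R] [Algebra O R]
    (hRsurj : Function.Surjective (algebraMap O R))
    (hRker : RingHom.ker (algebraMap O R) = Ideal.span {π ^ n})
    [TopologicalSpace R] [DiscreteTopology R]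
    [TopologicalSpace (LaurentSeries R)] [IsTopologicalRing (LaurentSeries R)]
    (hbasis : (nhds (0 : LaurentSeries R)).HasBasis (fun _ : ℕ => True)
      (fun k => {f : LaurentSeries R | ∀ i : ℤ, i < (k : ℤ) → f.coeff i = 0}))
    -- the Frobenius substitution `f(Z) ↦ f([π_L](Z))` on `R((Z))`
    (φA : LaurentSeries R →+* LaurentSeries R)
    (hφA : ∀ f : PowerSeries R,
      φA (HahnSeries.ofPowerSeries ℤ R f) = HahnSeries.ofPowerSeries ℤ R
        (PowerSeries.mk fun k => ∑ m ∈ Finset.range (k + 1),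
          PowerSeries.coeff m f *
            PowerSeries.coeff k ((PowerSeries.map (algebraMap O R) Xπ) ^ m)))
    -- the étale `φ`-module `(M, φM)` with its weak topology
    (M : Type*) [AddCommGroup M] [Module (LaurentSeries R) M]
    [Module.Finite (LaurentSeries R) M] [TopologicalSpace M]
    (d : ℕ) (pr : (Fin d → LaurentSeries R) →ₗ[LaurentSeries R] M)
    (hpr : Function.Surjective pr)
    (htopM : (inferInstance : TopologicalSpace M) =
      TopologicalSpace.coinduced pr (inferInstance : TopologicalSpace (Fin d → LaurentSeries R)))
    (φM : M →+ M)
    (hφM : ∀ (a : LaurentSeries R) (m : M), φM (a • m) = φA a • φM m)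
    (hEtale : Function.Bijective ⇑(frobLinearization φA φM hφM)) :
    IsOpenMap (fun m : M => φM m - m)
      ∧ ∀ U : Set M, IsOpen U → ∃ V : Set M, IsOpen V ∧
          (fun m : M => φM m - m) '' U = V ∩ Set.range (fun m : M => φM m - m) := by
  classical
  obtain ⟨gq, hXq⟩ := hXπq
  -- basic ring facts
  have hπRn : (algebraMap O R π) ^ n = 0 := by
    rw [← map_pow]
    have : π ^ n ∈ RingHom.ker (algebraMap O R) := by
      rw [hRker]; exact Ideal.mem_span_singleton_self _
    exact this
  have hq0 : (0:ℕ) < q := by omega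
  have hgq0 : PowerSeries.constantCoeff gq = 0 := by
    have h1 : PowerSeries.constantCoeff Xπ =
        PowerSeries.constantCoeff (PowerSeries.X ^ q) +
          π * PowerSeries.constantCoeff gq := by
      rw [hXq]; simp
    rw [hXπ0, map_pow, PowerSeries.constantCoeff_X, zero_pow (by omega), zero_add] at h1
    rcases mul_eq_zero.mp h1.symm with h | h
    · exact absurd h hπ.ne_zero
    · exact h
  have hFbar : PowerSeries.map (algebraMap O R) Xπ =
      PowerSeries.X ^ q + PowerSeries.C (algebraMap O R π) *
        PowerSeries.map (algebraMap O R) gq := by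
    rw [hXq]; push_cast; simp
  have hgbar : PowerSeries.constantCoeff (PowerSeries.map (algebraMap O R) gq) = 0 := by
    rw [← PowerSeries.coeff_zero_eq_constantCoeff, PowerSeries.coeff_map,
      PowerSeries.coeff_zero_eq_constantCoeff, hgq0, map_zero]
  have hpow := Statement11Aux.coeff_pow_eq_zero hπRn hgbar hFbar
  set c1 : ℕ := (q - 1) * (n - 1) with hc1
  -- Step 1 : contraction property of φA
  have hφA_mem : ∀ (k : ℕ) (x : LaurentSeries R), x ∈ Statement11Aux.VS R k →
      φA x ∈ Statement11Aux.VS R (((q * k : ℕ) : ℤ) - c1) := by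
    intro k x hx
    have hx0 : x ∈ Statement11Aux.VS R 0 :=
      Statement11Aux.VS_mono (by exact_mod_cast Nat.zero_le k) hx
    rw [Statement11Aux.eq_ofPowerSeries hx0, hφA]
    intro i hi
    rcases lt_or_ge i 0 with h | h
    · exact Statement11Aux.coeff_ofPowerSeries_neg h _
    · obtain ⟨j, rfl⟩ := Int.eq_ofNat_of_zero_le h
      rw [HahnSeries.ofPowerSeries_apply_coeff, PowerSeries.coeff_mk]
      refine Finset.sum_eq_zero fun m hm => ?_
      rcases lt_or_ge m k with hmk | hmk
      · rw [PowerSeries.coeff_mk, hx m (by exact_mod_cast hmk), zero_mul]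
      · rw [hpow m j ?_, mul_zero]
        have h2 : q * k ≤ q * m := Nat.mul_le_mul_left _ hmk
        omega
  -- Step 2 : lifts of φM on basis vectors
  have hlift : ∀ j : Fin d, ∃ y, pr y = φM (pr (Pi.single j 1)) := fun j => hpr _
  choose yl hyl using hlift
  set c : ℕ := Finset.univ.sup (fun p : Fin d × Fin d => (-(yl p.1 p.2).order).toNat) with hc
  have hylmem : ∀ j i, yl j i ∈ Statement11Aux.VS R (-(c:ℤ)) := by
    intro j i i' hi'
    apply HahnSeries.coeff_eq_zero_of_lt_order
    have h1 : (-(yl j i).order).toNat ≤ c :=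
      Finset.le_sup (f := fun p : Fin d × Fin d => (-(yl p.1 p.2).order).toNat)
        (Finset.mem_univ (j, i))
    have h2 := Int.self_le_toNat (-(yl j i).order)
    omega
  -- Step 3 : the semilinear lift Ψ on the free module
  have hΨadd : ∀ a b : Fin d → LaurentSeries R,
      (∑ j, φA ((a + b) j) • yl j) = (∑ j, φA (a j) • yl j) + (∑ j, φA (b j) • yl j) := by
    intro a b
    rw [← Finset.sum_add_distrib]
    refine Finset.sum_congr rfl fun j _ => ?_
    rw [Pi.add_apply, map_add, add_smul]
  set Ψ : (Fin d → LaurentSeries R) →+ (Fin d → LaurentSeries R) :=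
    AddMonoidHom.mk' (fun x => ∑ j, φA (x j) • yl j) hΨadd with hΨdef
  have hΨapp : ∀ x, Ψ x = ∑ j, φA (x j) • yl j := fun _ => rfl
  have hsingle : ∀ (j : Fin d) (a : LaurentSeries R),
      (Pi.single j a : Fin d → LaurentSeries R)
        = a • (Pi.single j 1 : Fin d → LaurentSeries R) := by
    intro j a
    funext i
    simp [Pi.single_apply, mul_ite]
  have hprsingle : ∀ x : Fin d → LaurentSeries R,
      pr x = ∑ j, (x j) • pr (Pi.single j 1) := by
    intro x
    conv_lhs => rw [← Finset.univ_sum_single x]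
    rw [map_sum]
    refine Finset.sum_congr rfl fun j _ => ?_
    rw [hsingle j (x j), map_smul]
  have hΨpr : ∀ x, pr (Ψ x) = φM (pr x) := by
    intro x
    calc pr (Ψ x) = ∑ j, φA (x j) • pr (yl j) := by
          rw [hΨapp, map_sum]
          exact Finset.sum_congr rfl fun j _ => map_smul _ _ _
      _ = ∑ j, φM ((x j) • pr (Pi.single j 1)) := by
          refine Finset.sum_congr rfl fun j _ => ?_
          rw [hyl j, ← hφM]
      _ = φM (pr x) := by rw [← map_sum, ← hprsingle]
  -- Step 4 : the product subgroups and the contraction for Ψ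
  set WS : ℤ → AddSubgroup (Fin d → LaurentSeries R) :=
    fun k => AddSubgroup.pi Set.univ (fun _ => Statement11Aux.VS R k) with hWSdef
  have hWS : ∀ (k : ℤ) (x : Fin d → LaurentSeries R),
      x ∈ WS k ↔ ∀ j, x j ∈ Statement11Aux.VS R k := by
    intro k x
    constructor
    · intro h j; exact h j (Set.mem_univ j)
    · intro h j _; exact h j
  have hWS_mono : ∀ {a b : ℤ}, a ≤ b → WS b ≤ WS a := by
    intro a b hab x hx
    rw [hWS] at hx ⊢
    exact fun j => Statement11Aux.VS_mono hab (hx j)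
  set k0 : ℕ := c1 + c + 1 with hk0
  have hcontr : ∀ (k : ℕ), k0 ≤ k → ∀ x ∈ WS (k:ℤ), Ψ x ∈ WS (((k+1 : ℕ)):ℤ) := by
    intro k hk x hx
    have hmem : Ψ x ∈ WS (((q * k : ℕ) : ℤ) - c1 - c) := by
      rw [hWS]
      intro i
      rw [hΨapp]
      have : (∑ j, φA (x j) • yl j) i = ∑ j, φA (x j) * yl j i := by
        rw [Finset.sum_apply]
        exact Finset.sum_congr rfl fun j _ => rfl
      rw [this]
      refine AddSubgroup.sum_mem _ fun j _ => ?_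
      have h1 := Statement11Aux.mul_mem_VS (hφA_mem k (x j) ((hWS _ _).1 hx j)) (hylmem j i)
      refine Statement11Aux.VS_mono (le_of_eq ?_) h1
      ring
    refine hWS_mono ?_ hmem
    have h2 : 2 * k ≤ q * k := Nat.mul_le_mul_right _ (by omega)
    push_cast
    omega
  -- Step 5 : solving (1 - Ψ) x = w by a geometric series
  have hsolve : ∀ (k : ℕ), k0 ≤ k → ∀ w ∈ WS (k:ℤ), ∃ u ∈ WS (k:ℤ),
      φM (pr u) - pr u = pr w := by
    intro k hk w hw
    set S : ℕ → (Fin d → LaurentSeries R) :=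
      fun N => ∑ m ∈ Finset.range N, Ψ^[m] w with hSdef
    have hiter : ∀ m : ℕ, Ψ^[m] w ∈ WS (((k + m : ℕ)):ℤ) := by
      intro m
      induction m with
      | zero => simpa using hw
      | succ m ih =>
        rw [Function.iterate_succ_apply']
        exact hcontr (k + m) (by omega) _ ih
    have hSmem : ∀ N, S N ∈ WS (k:ℤ) := by
      intro N
      exact AddSubgroup.sum_mem _ fun m _ =>
        hWS_mono (by exact_mod_cast Nat.le_add_right k m) (hiter m)
    have hSdiff : ∀ N P : ℕ, S (N + P) - S N ∈ WS (((k + N : ℕ)):ℤ) := by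
      intro N P
      have he : S (N + P) - S N = ∑ m ∈ Finset.Ico N (N + P), Ψ^[m] w := by
        rw [hSdef]
        simp only [Finset.range_eq_Ico]
        rw [← Finset.sum_Ico_consecutive _ (Nat.zero_le N) (Nat.le_add_right N P)]
        abel
      rw [he]
      refine AddSubgroup.sum_mem _ fun m hm => ?_
      rw [Finset.mem_Ico] at hm
      exact hWS_mono (by exact_mod_cast (by omega : k + N ≤ k + m)) (hiter m)
    have hstab : ∀ (N N' : ℕ), N ≤ N' → ∀ (j : Fin d) (i : ℤ), i < (k:ℤ) + N →
        (S N' j).coeff i = (S N j).coeff i := by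
      intro N N' h j i hi
      have h2 := hSdiff N (N' - N)
      rw [show N + (N' - N) = N' by omega] at h2
      have h3 := (hWS _ _).1 h2 j i (by push_cast; omega)
      rw [Pi.sub_apply, HahnSeries.coeff_sub] at h3
      exact sub_eq_zero.mp h3
    set xt : Fin d → LaurentSeries R := fun j =>
      HahnSeries.ofPowerSeries ℤ R (PowerSeries.mk fun m => (S (m + 1) j).coeff (m:ℤ))
      with hxtdef
    have hxt_nonneg : ∀ (j : Fin d) (m : ℕ),
        (xt j).coeff (m:ℤ) = (S (m + 1) j).coeff (m:ℤ) := by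
      intro j m
      rw [hxtdef]
      rw [HahnSeries.ofPowerSeries_apply_coeff, PowerSeries.coeff_mk]
    have hxt_stab : ∀ (N : ℕ) (j : Fin d) (i : ℤ), i < (k:ℤ) + N →
        (xt j).coeff i = (S N j).coeff i := by
      intro N j i hi
      rcases lt_or_ge i 0 with h | h
      · rw [Statement11Aux.coeff_ofPowerSeries_neg h]
        exact ((hWS _ _).1 (hSmem N) j i (by omega)).symm
      · obtain ⟨m, rfl⟩ := Int.eq_ofNat_of_zero_le h
        rw [hxt_nonneg]
        rcases le_total (m + 1) N with hN | hN
        · exact (hstab (m + 1) N hN j m (by push_cast; omega)).symm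
        · exact hstab N (m + 1) hN j m hi
    have hxt_sub : ∀ N : ℕ, xt - S N ∈ WS (((k + N : ℕ)):ℤ) := by
      intro N
      rw [hWS]
      intro j i hi
      rw [Pi.sub_apply, HahnSeries.coeff_sub, hxt_stab N j i (by push_cast at hi ⊢; omega),
        sub_self]
    have hxt_mem : xt ∈ WS (k:ℤ) := by
      have h0 := hxt_sub 0
      have : S 0 = 0 := by rw [hSdef]; simp
      rw [this, sub_zero] at h0
      exact h0
    have htel : ∀ N : ℕ, S N - Ψ (S N) = w - Ψ^[N] w := by
      intro N
      have h1 : Ψ (S N) = ∑ m ∈ Finset.range N, Ψ^[m + 1] w := by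
        rw [hSdef, map_sum]
        exact Finset.sum_congr rfl fun m _ => (Function.iterate_succ_apply' Ψ m w).symm
      have h2 : S (N + 1) = ∑ m ∈ Finset.range N, Ψ^[m + 1] w + w :=
        Finset.sum_range_succ' _ N
      have h3 : S (N + 1) = S N + Ψ^[N] w := Finset.sum_range_succ _ N
      have h4 : ∑ m ∈ Finset.range N, Ψ^[m + 1] w = S N + Ψ^[N] w - w := by
        rw [← h3, h2]; abel
      rw [h1, h4]; abel
    have hmain : xt - Ψ xt = w := by
      funext j
      ext i
      set N : ℕ := i.toNat + 1 with hN
      have hiN : i < (k:ℤ) + N := by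
        have := Int.self_le_toNat i
        push_cast; omega
      have hΨA : Ψ (xt - S N) ∈ WS (((k + N : ℕ)):ℤ) :=
        hWS_mono (by push_cast; omega) (hcontr (k + N) (by omega) _ (hxt_sub N))
      have hdecomp : xt - Ψ xt - w = (xt - S N) - Ψ (xt - S N) - Ψ^[N] w := by
        have h5 : xt - Ψ xt - w - ((xt - S N) - Ψ (xt - S N) - Ψ^[N] w)
            = (S N - Ψ (S N)) - (w - Ψ^[N] w) := by
          rw [map_sub]; abel
        rw [htel N, sub_self] at h5
        exact sub_eq_zero.mp h5
      have hmem : xt - Ψ xt - w ∈ WS (((k + N : ℕ)):ℤ) := by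
        rw [hdecomp]
        exact sub_mem (sub_mem (hxt_sub N) hΨA) (hiter N)
      have hz := (hWS _ _).1 hmem j i (by push_cast; omega)
      rw [Pi.sub_apply, Pi.sub_apply, HahnSeries.coeff_sub, HahnSeries.coeff_sub] at hz
      rw [Pi.sub_apply, HahnSeries.coeff_sub]
      exact sub_eq_zero.mp hz
    refine ⟨-xt, neg_mem hxt_mem, ?_⟩
    have : φM (pr (-xt)) - pr (-xt) = pr xt - pr (Ψ xt) := by
      rw [map_neg, map_neg, ← hΨpr]
      abel
    rw [this, ← map_sub, hmain]
  -- Step 6 : topology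
  have hVopen : ∀ kk : ℕ, IsOpen ((Statement11Aux.VS R (kk:ℤ) : Set (LaurentSeries R))) := by
    intro kk
    apply AddSubgroup.isOpen_of_mem_nhds
    exact hbasis.mem_of_mem (i := kk) trivial
  have hWopen : ∀ kk : ℕ, IsOpen ((WS (kk:ℤ) : Set (Fin d → LaurentSeries R))) := by
    intro kk
    have he : (WS (kk:ℤ) : Set (Fin d → LaurentSeries R)) =
        Set.pi Set.univ (fun _ => (Statement11Aux.VS R (kk:ℤ) : Set (LaurentSeries R))) := rfl
    rw [he]
    exact isOpen_set_pi Set.finite_univ fun j _ => hVopen kk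
  have hpr_preopen : ∀ U : Set M, IsOpen U → IsOpen (pr ⁻¹' U) := by
    intro U hU
    have hU' : @IsOpen M (TopologicalSpace.coinduced pr inferInstance) U := by
      rw [← htopM]; exact hU
    exact isOpen_coinduced.mp hU'
  have hpr_open : ∀ S : Set (Fin d → LaurentSeries R), IsOpen S → IsOpen (pr '' S) := by
    intro S hS
    have key : IsOpen (pr ⁻¹' (pr '' S)) := by
      have he : pr ⁻¹' (pr '' S) =
          ⋃ v : {v : Fin d → LaurentSeries R // pr v = 0}, (fun w => w + v.1) ⁻¹' S := by
        ext w
        simp only [Set.mem_preimage, Set.mem_image, Set.mem_iUnion]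
        constructor
        · rintro ⟨s, hs, he⟩
          exact ⟨⟨s - w, by rw [map_sub, he, sub_self]⟩, by
            show w + (s - w) ∈ S
            simpa using hs⟩
        · rintro ⟨⟨v, hv⟩, h⟩
          exact ⟨w + v, h, by rw [map_add, hv, add_zero]⟩
      rw [he]
      exact isOpen_iUnion fun v =>
        (continuous_id.add continuous_const).isOpen_preimage S hS
    have h2 : @IsOpen M (TopologicalSpace.coinduced pr inferInstance) (pr '' S) :=
      isOpen_coinduced.mpr key
    rwa [← htopM] at h2
  have hnhds : ∀ (T : Set (Fin d → LaurentSeries R)) (w0 : Fin d → LaurentSeries R),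
      IsOpen T → w0 ∈ T → ∃ kk : ℕ, k0 ≤ kk ∧ ∀ w ∈ WS (kk:ℤ), w0 + w ∈ T := by
    intro T w0 hT hw0
    have hT' : (fun w => w0 + w) ⁻¹' T ∈ nhds (0 : Fin d → LaurentSeries R) := by
      refine ContinuousAt.preimage_mem_nhds
        ((continuous_const.add continuous_id).continuousAt) ?_
      rw [add_zero]
      exact hT.mem_nhds hw0
    rw [nhds_pi] at hT'
    obtain ⟨I, hIfin, t, ht, hsub⟩ := Filter.mem_pi.1 hT'
    choose kk _triv hkk using fun i : Fin d => hbasis.mem_iff.1 (ht i)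
    refine ⟨max k0 (Finset.univ.sup kk), le_max_left _ _, fun w hw => ?_⟩
    refine hsub fun i _ => ?_
    refine hkk i ?_
    intro i' hi'
    refine (hWS _ _).1 hw i i' (lt_of_lt_of_le hi' ?_)
    have h1 : kk i ≤ Finset.univ.sup kk := Finset.le_sup (Finset.mem_univ i)
    exact_mod_cast le_trans h1 (le_max_right _ _)
  -- Step 7 : assembling the open-map property
  have hopenmap : IsOpenMap (fun m : M => φM m - m) := by
    intro U hU
    rw [isOpen_iff_forall_mem_open]
    rintro y0 ⟨x0, hx0U, rfl⟩
    obtain ⟨w0, rfl⟩ := hpr x0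
    obtain ⟨kk, hkk0, hkk⟩ := hnhds (pr ⁻¹' U) w0 (hpr_preopen U hU) hx0U
    obtain ⟨v0, hv0⟩ := hpr (φM (pr w0) - pr w0)
    refine ⟨pr '' ((fun w => v0 + w) '' (WS (kk:ℤ) : Set _)), ?_, ?_, ?_⟩
    · rintro y ⟨w', ⟨w, hwmem, rfl⟩, rfl⟩
      obtain ⟨u, humem, hu⟩ := hsolve kk hkk0 w hwmem
      refine ⟨pr w0 + pr u, ?_, ?_⟩
      · have : w0 + u ∈ pr ⁻¹' U := hkk u humem
        rw [Set.mem_preimage, map_add] at this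
        exact this
      · show φM (pr w0 + pr u) - (pr w0 + pr u) = pr (v0 + w)
        rw [map_add φM, map_add pr, hv0, ← hu]
        abel
    · exact hpr_open _ ((Homeomorph.addLeft v0).isOpenMap _ (hWopen kk))
    · refine ⟨v0 + 0, ⟨0, zero_mem _, rfl⟩, ?_⟩
      rw [add_zero, hv0]
  exact ⟨hopenmap, fun U hU =>
    ⟨(fun m : M => φM m - m) '' U, hopenmap U hU,
      (Set.inter_eq_self_of_subset_left (Set.image_subset_range _ _)).symm⟩⟩
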